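/- The critical values of the rational map R(z) = ((1+2ω₃)(z³ + z⁻³) − 6)/((1+2ω₃)(z³ + z⁻³) + 6) (equivalently, its branch values as a branched cover of the Riemann sphere) are contained in the set {1, ω₃, ω₃²}. -/

import Mathlib

open Complex

/-- The critical (branch) values of the degree-6 rational map
`R(z) = ((1+2ω₃)(z³ + z⁻³) − 6) / ((1+2ω₃)(z³ + z⁻³) + 6)`, written in lowest
terms as `R = P/Q` with `P(z) = (1+2ω₃)(z⁶+1) − 6z³` and
`Q(z) = (1+2ω₃)(z⁶+1) + 6z³`, viewed as a branched self-cover of the Riemann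
sphere, are contained in `{1, ω₃, ω₃²}`.  Concretely:
(a) at any point of `ℂ` which is not a pole, if the derivative of `R = P/Q`
vanishes then the value lies in `{1, ω₃, ω₃²}`;
(b) no pole of `R` (a zero of `Q`) is a critical point in the chart `w = 1/R`
(so `∞` is not a branch value);
(c) in the chart `w = 1/z` at `∞` the map reads `P(w)/Q(w)` again (the
polynomials are palindromic), and if its derivative vanishes at `w = 0` the
value `P(0)/Q(0)` lies in `{1, ω₃, ω₃²}`. -/
theorem stmt5 (ω₃ : ℂ) (hω : ω₃ = Complex.exp (2 * Real.pi * Complex.I / 3))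
    (P Q : ℂ → ℂ)
    (hP : P = fun z => (1 + 2 * ω₃) * (z ^ 6 + 1) - 6 * z ^ 3)
    (hQ : Q = fun z => (1 + 2 * ω₃) * (z ^ 6 + 1) + 6 * z ^ 3) :
    (∀ z : ℂ, Q z ≠ 0 → deriv (fun x => P x / Q x) z = 0 →
        P z / Q z ∈ ({1, ω₃, ω₃ ^ 2} : Set ℂ)) ∧
    (∀ z : ℂ, Q z = 0 → deriv (fun x => Q x / P x) z ≠ 0) ∧
    ((∀ w : ℂ, w ≠ 0 → P w / Q w = P (1 / w) / Q (1 / w)) ∧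
      (deriv (fun x => P x / Q x) 0 = 0 →
        P 0 / Q 0 ∈ ({1, ω₃, ω₃ ^ 2} : Set ℂ))) := by
  -- basic facts about ω₃
  have hprim : IsPrimitiveRoot ω₃ 3 := by
    rw [hω]; exact_mod_cast Complex.isPrimitiveRoot_exp 3 (by norm_num)
  have hne1 : ω₃ ≠ 1 := hprim.ne_one (by norm_num)
  have h3 : ω₃ ^ 3 = 1 := hprim.pow_eq_one
  have hc : ω₃ ^ 2 + ω₃ + 1 = 0 := by
    have factored : (ω₃ - 1) * (ω₃ ^ 2 + ω₃ + 1) = 0 := by linear_combination h3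
    exact (mul_eq_zero.mp factored).resolve_left (sub_ne_zero.mpr hne1)
  have hc2 : (1 + 2 * ω₃) ^ 2 = -3 := by linear_combination 4 * hc
  have hcne : (1 + 2 * ω₃) ≠ 0 := by
    intro h
    have h48 : (0 : ℂ) = -3 := by linear_combination hc2 - (1 + 2 * ω₃) * h
    norm_num at h48
  -- derivative facts
  have hPd : ∀ y : ℂ, HasDerivAt P (6 * (1 + 2 * ω₃) * y ^ 5 - 18 * y ^ 2) y := by
    intro y
    rw [hP]
    have h := (((hasDerivAt_pow 6 y).add_const 1).const_mul (1 + 2 * ω₃)).sub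
      ((hasDerivAt_pow 3 y).const_mul 6)
    refine h.congr_deriv ?_
    norm_num; ring
  have hQd : ∀ y : ℂ, HasDerivAt Q (6 * (1 + 2 * ω₃) * y ^ 5 + 18 * y ^ 2) y := by
    intro y
    rw [hQ]
    have h := (((hasDerivAt_pow 6 y).add_const 1).const_mul (1 + 2 * ω₃)).add
      ((hasDerivAt_pow 3 y).const_mul 6)
    refine h.congr_deriv ?_
    norm_num; ring
  refine ⟨?_, ?_, ?_, ?_⟩
  · -- part (a)
    intro z hz hd
    have hder := ((hPd z).div (hQd z) hz).deriv
    rw [show deriv (P / Q) z = deriv (fun x => P x / Q x) z from rfl, hd] at hder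
    have hnum : (6 * (1 + 2 * ω₃) * z ^ 5 - 18 * z ^ 2) * Q z -
        P z * (6 * (1 + 2 * ω₃) * z ^ 5 + 18 * z ^ 2) = 0 :=
      (div_eq_zero_iff.mp hder.symm).resolve_right (pow_ne_zero 2 hz)
    simp only [hP, hQ] at hnum
    have key : (1 + 2 * ω₃) * (z ^ 2 * ((z ^ 3 - 1) * (z ^ 3 + 1))) = 0 := by
      linear_combination (1 / 36 : ℂ) * hnum
    have key2 := (mul_eq_zero.mp key).resolve_left hcne
    simp only [Set.mem_insert_iff, Set.mem_singleton_iff]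
    rcases mul_eq_zero.mp key2 with h0 | h1
    · -- z = 0
      have hz0 : z = 0 := by
        exact pow_eq_zero_iff (two_ne_zero).elim |>.mp h0
      left
      subst hz0
      simp only [hP, hQ]
      norm_num
      exact hcne
    · rcases mul_eq_zero.mp h1 with h1 | h1
      · -- z ^ 3 = 1
        have hz3 : z ^ 3 = 1 := by linear_combination h1
        have hz6 : z ^ 6 = 1 := by linear_combination (z ^ 3 + 1) * hz3
        right; left
        have hQz : Q z = 2 * (1 + 2 * ω₃) + 6 := by
          simp only [hQ]
          linear_combination (1 + 2 * ω₃) * hz6 + 6 * hz3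
        have hPz : P z = 2 * (1 + 2 * ω₃) - 6 := by
          simp only [hP]
          linear_combination (1 + 2 * ω₃) * hz6 - 6 * hz3
        have hQne : (2 * (1 + 2 * ω₃) + 6 : ℂ) ≠ 0 := by
          intro h
          have : (3 : ℂ) = 0 := by
            linear_combination hc - ((ω₃ - 1) / 4) * h
          norm_num at this
        rw [hPz, hQz, div_eq_iff hQne]
        linear_combination (-4 : ℂ) * hc
      · -- z ^ 3 = -1
        have hz3 : z ^ 3 = -1 := by linear_combination h1
        have hz6 : z ^ 6 = 1 := by linear_combination (z ^ 3 - 1) * hz3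
        right; right
        have hQz : Q z = 2 * (1 + 2 * ω₃) - 6 := by
          simp only [hQ]
          linear_combination (1 + 2 * ω₃) * hz6 + 6 * hz3
        have hPz : P z = 2 * (1 + 2 * ω₃) + 6 := by
          simp only [hP]
          linear_combination (1 + 2 * ω₃) * hz6 - 6 * hz3
        have hQne : (2 * (1 + 2 * ω₃) - 6 : ℂ) ≠ 0 := by
          intro h
          apply hne1
          linear_combination (1 / 4 : ℂ) * h
        rw [hPz, hQz, div_eq_iff hQne]
        linear_combination (8 - 4 * ω₃) * hc
  · -- part (b)
    intro z hz
    have hz0 : z ≠ 0 := by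
      intro h
      subst h
      simp only [hQ] at hz
      norm_num at hz
      exact hcne hz
    have hPne : P z ≠ 0 := by
      intro h
      simp only [hP] at h
      simp only [hQ] at hz
      have hz3 : z ^ 3 = 0 := by linear_combination (-1 / 12 : ℂ) * (h - hz)
      exact hz0 (pow_eq_zero_iff (three_ne_zero).elim |>.mp hz3)
    intro h0
    rw [show deriv (fun x => Q x / P x) z = deriv (Q / P) z from rfl, ((hQd z).div (hPd z) hPne).deriv] at h0
    have hnum : (6 * (1 + 2 * ω₃) * z ^ 5 + 18 * z ^ 2) * P z -
        Q z * (6 * (1 + 2 * ω₃) * z ^ 5 - 18 * z ^ 2) = 0 :=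
      (div_eq_zero_iff.mp h0).resolve_right (pow_ne_zero 2 hPne)
    simp only [hP, hQ] at hnum
    simp only [hQ] at hz
    have key : (1 + 2 * ω₃) * (z ^ 2 * (z ^ 6 - 1)) = 0 := by
      linear_combination (-1 / 36 : ℂ) * hnum
    have key2 := (mul_eq_zero.mp key).resolve_left hcne
    have h6 : z ^ 6 = 1 := by
      have := (mul_eq_zero.mp key2).resolve_left (pow_ne_zero 2 hz0)
      linear_combination this
    have h3z : 6 * z ^ 3 + 2 * (1 + 2 * ω₃) = 0 := by
      linear_combination hz - (1 + 2 * ω₃) * h6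
    have h48 : (48 : ℂ) = 0 := by
      linear_combination (-36 : ℂ) * h6 + 4 * hc2 + (6 * z ^ 3 - 2 * (1 + 2 * ω₃)) * h3z
    norm_num at h48
  · -- part (c) first
    intro w hw
    have h6 : w ^ 6 ≠ 0 := pow_ne_zero _ hw
    have hp1 : P (1 / w) = P w / w ^ 6 := by
      simp only [hP]; field_simp; ring
    have hq1 : Q (1 / w) = Q w / w ^ 6 := by
      simp only [hQ]; field_simp; ring
    rw [hp1, hq1, div_div_div_comm, div_self h6, div_one]
  · -- part (c) second
    intro _
    simp only [Set.mem_insert_iff, Set.mem_singleton_iff]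
    left
    simp only [hP, hQ]
    norm_num
    exact hcne
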